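/- Case 2 of pattern fusion is well-defined and correct: let o and f be permutations of {1,...,m} with suffixorder(o) = prefixorder(f) and o_1 ≠ f_m. Then there is a unique permutation u of {1,...,m+1} with prefixorder(u) = o and suffixorder(u) = f; explicitly, if o_1 < f_m then u_1 = o_1 and u_{i+1} = f_i if f_i < o_1, u_{i+1} = f_i + 1 otherwise, and if o_1 > f_m then u_1 = o_1 + 1 and u_{i+1} = f_i if f_i ≤ o_1, u_{i+1} = f_i + 1 otherwise. -/

import Mathlib

/-- Rank of entry `j` among the entries of `q` (1-indexed rank). -/
def rankMap {α : Type*} [LinearOrder α] {m : ℕ} (q : Fin m → α) : Fin m → ℕ :=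
  fun j => (Finset.univ.filter fun i => q i ≤ q j).card

/-- `x` is an order-preserving pattern (a permutation of `{1,...,m}` written as a sequence). -/
def IsOPP {m : ℕ} (x : Fin m → ℕ) : Prop :=
  Function.Injective x ∧ ∀ j, 1 ≤ x j ∧ x j ≤ m

/-- The length-`ℓ` window of the (1-indexed) time series `k` ending at index `c`. -/
def window (k : ℕ → ℝ) (c ℓ : ℕ) : Fin ℓ → ℝ :=
  fun j => k (c - ℓ + 1 + (j : ℕ))

/-- `c` is an occurrence (end index) of pattern `p` in the time series `k` of length `n`. -/
def isOcc (k : ℕ → ℝ) (n : ℕ) {ℓ : ℕ} (p : Fin ℓ → ℕ) (c : ℕ) : Prop :=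
  ℓ ≤ c ∧ c ≤ n ∧ rankMap (window k c ℓ) = p

/-- Relative order of the first `m` entries of `x`. -/
def prefixorder {α : Type*} [LinearOrder α] {m : ℕ} (x : Fin (m+1) → α) : Fin m → ℕ :=
  rankMap (fun j : Fin m => x j.castSucc)

/-- Relative order of the last `m` entries of `x`. -/
def suffixorder {α : Type*} [LinearOrder α] {m : ℕ} (x : Fin (m+1) → α) : Fin m → ℕ :=
  rankMap (fun j : Fin m => x j.succ)

open Classical in
/-- The set of occurrences of `p` in `k`. -/
noncomputable def occSet (k : ℕ → ℝ) (n : ℕ) {ℓ : ℕ} (p : Fin ℓ → ℕ) : Finset ℕ :=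
  (Finset.Icc 1 n).filter fun c => isOcc k n p c

/-- The support of `p` in `k`. -/
noncomputable def supp (k : ℕ → ℝ) (n : ℕ) {ℓ : ℕ} (p : Fin ℓ → ℕ) : ℕ :=
  (occSet k n p).card

lemma rankMap_eq_self {m : ℕ} {x : Fin m → ℕ} (hx : IsOPP x) : rankMap x = x := by
  obtain ⟨hinj, hb⟩ := hx
  funext j
  have himg : Finset.image x Finset.univ = Finset.Icc 1 m := by
    apply Finset.eq_of_subset_of_card_le
    · intro v hv
      simp only [Finset.mem_image] at hv
      obtain ⟨i, -, rfl⟩ := hv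
      simpa [Finset.mem_Icc] using hb i
    · rw [Finset.card_image_of_injective _ hinj]
      simp
  have h1 : (Finset.univ.filter fun i => x i ≤ x j).card
      = ((Finset.image x Finset.univ).filter fun v => v ≤ x j).card := by
    rw [Finset.filter_image, Finset.card_image_of_injective _ hinj]
  have h2 : (Finset.Icc 1 m).filter (fun v => v ≤ x j) = Finset.Icc 1 (x j) := by
    ext v
    simp only [Finset.mem_filter, Finset.mem_Icc]
    have := hb j
    omega
  unfold rankMap
  rw [h1, himg, h2, Nat.card_Icc]
  omega

lemma rankMap_comp_mono {m : ℕ} (q : Fin m → ℕ) (g : ℕ → ℕ)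
    (hg : ∀ a b, g a ≤ g b ↔ a ≤ b) : rankMap (fun i => g (q i)) = rankMap q := by
  funext j
  unfold rankMap
  congr 1
  ext i
  simp [hg]

lemma prefixorder_add {m : ℕ} {u : Fin (m+1) → ℕ} (hu : IsOPP u) (j : Fin m) :
    prefixorder u j + (if u (Fin.last m) ≤ u j.castSucc then 1 else 0) = u j.castSucc := by
  have h1 := congrFun (rankMap_eq_self hu) j.castSucc
  unfold rankMap at h1
  unfold prefixorder rankMap
  rw [Finset.card_filter] at h1 ⊢
  rw [Fin.sum_univ_castSucc] at h1
  exact h1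

lemma suffixorder_add {m : ℕ} {u : Fin (m+1) → ℕ} (hu : IsOPP u) (j : Fin m) :
    suffixorder u j + (if u 0 ≤ u j.succ then 1 else 0) = u j.succ := by
  have h1 := congrFun (rankMap_eq_self hu) j.succ
  unfold rankMap at h1
  unfold suffixorder rankMap
  rw [Finset.card_filter] at h1 ⊢
  rw [Fin.sum_univ_succ] at h1
  beta_reduce
  omega

lemma formulaLemma {m : ℕ} (o f : Fin (m+1) → ℕ)
    (u : Fin (m+2) → ℕ) (hu : IsOPP u) (hp : prefixorder u = o) (hs : suffixorder u = f) :
    (o 0 < f (Fin.last m) → u 0 = o 0 ∧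
        ∀ i : Fin (m+1), u i.succ = if f i < o 0 then f i else f i + 1) ∧
    (f (Fin.last m) < o 0 → u 0 = o 0 + 1 ∧
        ∀ i : Fin (m+1), u i.succ = if f i ≤ o 0 then f i else f i + 1) := by
  have h1 := prefixorder_add hu (0 : Fin (m+1))
  rw [hp, Fin.castSucc_zero] at h1
  have h2 := suffixorder_add hu (Fin.last m)
  rw [hs, Fin.succ_last] at h2
  simp only [Nat.succ_eq_add_one] at h2
  have hab : u 0 ≠ u (Fin.last (m+1)) := by
    intro h
    have h' := congrArg Fin.val (hu.1 h)
    simp only [Fin.val_zero, Fin.val_last] at h'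
    omega
  have key : ∀ i : Fin (m+1), u i.succ ≠ u 0 := by
    intro i h
    exact Fin.succ_ne_zero i (hu.1 h)
  constructor
  · intro hlt
    constructor
    · split_ifs at h1 h2 <;> omega
    · intro i
      have h3 := suffixorder_add hu i
      rw [hs] at h3
      have h4 := key i
      split_ifs at h1 h2 h3 ⊢ <;> omega
  · intro hgt
    constructor
    · split_ifs at h1 h2 <;> omega
    · intro i
      have h3 := suffixorder_add hu i
      rw [hs] at h3
      have h4 := key i
      split_ifs at h1 h2 h3 ⊢ <;> omega

lemma exists_gen {m : ℕ} (o f : Fin (m+1) → ℕ) (ho : IsOPP o) (hf : IsOPP f)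
    (a : ℕ) (φ ψ : ℕ → ℕ)
    (hφ : ∀ x y, φ x ≤ φ y ↔ x ≤ y) (hψ : ∀ x y, ψ x ≤ ψ y ↔ x ≤ y)
    (h0 : ψ (o 0) = a)
    (hab : 1 ≤ a ∧ a ≤ m + 2)
    (hφb : ∀ i : Fin (m+1), 1 ≤ φ (f i) ∧ φ (f i) ≤ m + 2)
    (hane : ∀ i : Fin (m+1), φ (f i) ≠ a)
    (hkey : ∀ k : Fin m, φ (f k.castSucc) = ψ (o k.succ)) :
    IsOPP (Fin.cases a (fun i => φ (f i)) : Fin (m+2) → ℕ) ∧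
    prefixorder (Fin.cases a (fun i => φ (f i)) : Fin (m+2) → ℕ) = o ∧
    suffixorder (Fin.cases a (fun i => φ (f i)) : Fin (m+2) → ℕ) = f := by
  set U : Fin (m+2) → ℕ := Fin.cases a (fun i => φ (f i)) with hUdef
  have hU0 : U 0 = a := rfl
  have hUs : ∀ i : Fin (m+1), U i.succ = φ (f i) := fun i => by simp [hUdef]
  refine ⟨⟨?_, ?_⟩, ?_, ?_⟩
  · intro j1 j2 h
    induction j1 using Fin.cases with
    | zero =>
      induction j2 using Fin.cases with
      | zero => rfl
      | succ i => rw [hU0, hUs] at h; exact absurd h.symm (hane i)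
    | succ i =>
      induction j2 using Fin.cases with
      | zero => rw [hU0, hUs] at h; exact absurd h (hane i)
      | succ i' =>
        rw [hUs, hUs] at h
        have hfe : f i = f i' := le_antisymm ((hφ _ _).1 h.le) ((hφ _ _).1 h.ge)
        rw [hf.1 hfe]
  · intro j
    induction j using Fin.cases with
    | zero => rw [hU0]; exact hab
    | succ i => rw [hUs]; exact hφb i
  · have heq : (fun j : Fin (m+1) => U j.castSucc) = fun j => ψ (o j) := by
      funext j
      induction j using Fin.cases with
      | zero => rw [Fin.castSucc_zero, hU0, h0.symm]
      | succ k => rw [← Fin.succ_castSucc, hUs, hkey]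
    show rankMap (fun j : Fin (m+1) => U j.castSucc) = o
    rw [heq, rankMap_comp_mono o ψ hψ, rankMap_eq_self ho]
  · have heq : (fun j : Fin (m+1) => U j.succ) = fun j => φ (f j) := funext hUs
    show rankMap (fun j : Fin (m+1) => U j.succ) = f
    rw [heq, rankMap_comp_mono f φ hφ, rankMap_eq_self hf]

theorem stmt11 {m : ℕ} (o f : Fin (m+1) → ℕ) (ho : IsOPP o) (hf : IsOPP f)
    (hof : suffixorder o = prefixorder f) (hne : o 0 ≠ f (Fin.last m)) :
    (∃! u : Fin (m+2) → ℕ, IsOPP u ∧ prefixorder u = o ∧ suffixorder u = f) ∧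
    (∀ u : Fin (m+2) → ℕ, IsOPP u → prefixorder u = o → suffixorder u = f →
      ((o 0 < f (Fin.last m) →
          u 0 = o 0 ∧
            ∀ i : Fin (m+1), u i.succ = if f i < o 0 then f i else f i + 1) ∧
       (f (Fin.last m) < o 0 →
          u 0 = o 0 + 1 ∧
            ∀ i : Fin (m+1), u i.succ = if f i ≤ o 0 then f i else f i + 1))) := by
  have star : ∀ k : Fin m, o k.succ + (if f (Fin.last m) ≤ f k.castSucc then 1 else 0)
      = f k.castSucc + (if o 0 ≤ o k.succ then 1 else 0) := by
    intro k
    have ha := suffixorder_add ho k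
    have hb := prefixorder_add hf k
    rw [hof] at ha
    split_ifs at ha hb ⊢ <;> omega
  have hwne : ∀ k : Fin m, o k.succ ≠ o 0 := fun k h => Fin.succ_ne_zero k (ho.1 h)
  have hvne : ∀ k : Fin m, f k.castSucc ≠ f (Fin.last m) :=
    fun k h => (Fin.castSucc_lt_last k).ne (hf.1 h)
  refine ⟨?_, fun u hu hp hs => formulaLemma o f u hu hp hs⟩
  rcases Nat.lt_or_ge (o 0) (f (Fin.last m)) with hlt | hge
  · -- case o 0 < f last
    obtain ⟨hU1, hU2, hU3⟩ := exists_gen o f ho hf (o 0)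
      (fun x => if x < o 0 then x else x + 1) (fun x => if x ≤ f (Fin.last m) then x else x + 1)
      (by intro x y; split_ifs <;> omega)
      (by intro x y; split_ifs <;> omega)
      (by rw [if_pos hlt.le])
      (by have := ho.2 0; omega)
      (by intro i; have := hf.2 i; split_ifs <;> omega)
      (by intro i; split_ifs <;> omega)
      (by intro k; have h1 := star k; have h2 := hwne k; have h3 := hvne k
          split_ifs at h1 ⊢ <;> omega)
    refine ⟨_, ⟨hU1, hU2, hU3⟩, ?_⟩
    intro y ⟨hy1, hy2, hy3⟩
    have F1 := (formulaLemma o f y hy1 hy2 hy3).1 hlt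
    have F2 := (formulaLemma o f _ hU1 hU2 hU3).1 hlt
    funext j
    induction j using Fin.cases with
    | zero => rw [F1.1, F2.1]
    | succ i => rw [F1.2 i, F2.2 i]
  · have hgt : f (Fin.last m) < o 0 := lt_of_le_of_ne hge (Ne.symm hne)
    obtain ⟨hU1, hU2, hU3⟩ := exists_gen o f ho hf (o 0 + 1)
      (fun x => if x ≤ o 0 then x else x + 1) (fun x => if x < f (Fin.last m) then x else x + 1)
      (by intro x y; split_ifs <;> omega)
      (by intro x y; split_ifs <;> omega)
      (by rw [if_neg (by omega)])
      (by have := ho.2 0; omega)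
      (by intro i; have := hf.2 i; split_ifs <;> omega)
      (by intro i; split_ifs <;> omega)
      (by intro k; have h1 := star k; have h2 := hwne k; have h3 := hvne k
          split_ifs at h1 ⊢ <;> omega)
    refine ⟨_, ⟨hU1, hU2, hU3⟩, ?_⟩
    intro y ⟨hy1, hy2, hy3⟩
    have F1 := (formulaLemma o f y hy1 hy2 hy3).2 hgt
    have F2 := (formulaLemma o f _ hU1 hU2 hU3).2 hgt
    funext j
    induction j using Fin.cases with
    | zero => rw [F1.1, F2.1]
    | succ i => rw [F1.2 i, F2.2 i]
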